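/- Let G = (V,E) be a finite simple undirected graph with n = |V| ≥ 2, let s, t ∈ V be distinct, let k ≥ 2 be an integer, and suppose S ⊆ V∖{s,t} is an (s,t)-separator with |S| ≤ k - 1. Set ε = 1/(16(k-1)) and r = ⌈320·k³·ln n⌉. Define w^{(1)}(s) = w^{(1)}(t) = 0 and w^{(1)}(v) = 1 for all other v. Suppose that for each i = 1, …, r a simple (s,t)-path P^{(i)} is chosen, and weights are updated by w^{(i+1)}(v) = (1+ε)·w^{(i)}(v) for v ∈ V(P^{(i)}) and w^{(i+1)}(v) = w^{(i)}(v) otherwise. Then, writing W^{(i)} = Σ_{v ∈ V} w^{(i)}(v), there exists an iteration i ∈ {1,…,r} with w^{(i)}(P^{(i)}) ≥ W^{(i)}/(k - 0.6), where w^{(i)}(P^{(i)}) = Σ_{v ∈ V(P^{(i)})} w^{(i)}(v). -/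

import Mathlib

set_option maxHeartbeats 2000000 in

/-- multiplicative weight updates for fractional `(s,t)`-cuts.
Let `G` be a finite simple graph on `n ≥ 2` vertices, `s ≠ t`, `k ≥ 2`, and
`S ⊆ V ∖ {s,t}` an `(s,t)`-separator with `|S| ≤ k - 1` (every `(s,t)`-path meets `S`).
Set `ε = 1/(16(k-1))` and `r = ⌈320 k³ ln n⌉`. Initialize `w⁽¹⁾(s) = w⁽¹⁾(t) = 0` and
`w⁽¹⁾(v) = 1` otherwise. If in each iteration `i = 1,…,r` a simple `(s,t)`-path `P⁽ⁱ⁾` is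
chosen and the weights of its vertices are multiplied by `(1+ε)`, then some iteration `i`
satisfies `w⁽ⁱ⁾(P⁽ⁱ⁾) ≥ W⁽ⁱ⁾/(k - 0.6)` where `W⁽ⁱ⁾ = ∑_v w⁽ⁱ⁾(v)`. -/
theorem stmt_13 {V : Type*} [Fintype V] [DecidableEq V] (G : SimpleGraph V)
    (n : ℕ) (hn : n = Fintype.card V) (hn2 : 2 ≤ n)
    (s t : V) (hst : s ≠ t)
    (k : ℕ) (hk : 2 ≤ k)
    (S : Finset V) (hSs : s ∉ S) (hSt : t ∉ S) (hScard : S.card ≤ k - 1)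
    (hsep : ∀ p : G.Walk s t, p.IsPath → ∃ v ∈ S, v ∈ p.support)
    (ε : ℝ) (hε : ε = 1 / (16 * ((k : ℝ) - 1)))
    (r : ℕ) (hr : r = ⌈320 * (k : ℝ) ^ 3 * Real.log n⌉₊)
    (P : ℕ → G.Walk s t) (hP : ∀ i, 1 ≤ i → i ≤ r → (P i).IsPath)
    (w : ℕ → V → ℝ)
    (hw1s : w 1 s = 0) (hw1t : w 1 t = 0)
    (hw1o : ∀ v, v ≠ s → v ≠ t → w 1 v = 1)
    (hupd : ∀ i, 1 ≤ i → i ≤ r → ∀ v,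
      w (i + 1) v = if v ∈ (P i).support then (1 + ε) * w i v else w i v) :
    ∃ i, 1 ≤ i ∧ i ≤ r ∧
      ((P i).support.map (w i)).sum ≥ (∑ v, w i v) / ((k : ℝ) - 0.6) := by
  by_contra hcon
  push_neg at hcon
  -- basic positivity facts
  have hkR : (2 : ℝ) ≤ (k : ℝ) := by exact_mod_cast hk
  have hk1 : (0 : ℝ) < (k : ℝ) - 1 := by linarith
  have hε0 : 0 < ε := by rw [hε]; positivity
  have hk06 : (0 : ℝ) < (k : ℝ) - 0.6 := by norm_num; linarith
  have hnR : (2 : ℝ) ≤ (n : ℝ) := by exact_mod_cast hn2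
  have hlogn : 0 < Real.log n := Real.log_pos (by linarith)
  have hr1 : 1 ≤ r := by
    rw [hr]
    rw [Nat.one_le_iff_ne_zero, ← Nat.pos_iff_ne_zero, Nat.ceil_pos]
    positivity
  -- nonnegativity of weights
  have hwnn : ∀ i, 1 ≤ i → i ≤ r + 1 → ∀ v, 0 ≤ w i v := by
    intro i hi
    induction i, hi using Nat.le_induction with
    | base =>
      intro _ v
      by_cases hvs : v = s
      · rw [hvs, hw1s]
      · by_cases hvt : v = t
        · rw [hvt, hw1t]
        · rw [hw1o v hvs hvt]; norm_num
    | succ i hi ih =>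
      intro hir v
      rw [hupd i hi (by omega) v]
      have h0 := ih (by omega) v
      split
      · nlinarith
      · exact h0
  -- the path sum as a Finset sum
  have hps : ∀ i, 1 ≤ i → i ≤ r →
      ((P i).support.map (w i)).sum = ∑ v ∈ (P i).support.toFinset, w i v := by
    intro i h1 h2
    exact (List.sum_toFinset (w i) (hP i h1 h2).support_nodup).symm
  -- recurrence for the total weight
  set q : ℝ := 1 + ε / ((k : ℝ) - 0.6) with hq
  have hq1 : 1 < q := by
    rw [hq]
    have h : 0 < ε / ((k : ℝ) - 0.6) := by positivity
    linarith
  have hq0 : 0 < q := by linarith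
  have hWle : ∀ i, 1 ≤ i → i ≤ r → ∑ v, w (i + 1) v ≤ (∑ v, w i v) * q := by
    intro i h1 h2
    have hrec : ∑ v, w (i + 1) v
        = ∑ v, w i v + ε * ∑ v ∈ (P i).support.toFinset, w i v := by
      have : ∀ v, w (i + 1) v = w i v + (if v ∈ (P i).support.toFinset then ε * w i v else 0) := by
        intro v
        rw [hupd i h1 h2 v]
        by_cases hv : v ∈ (P i).support
        · rw [if_pos hv, if_pos (List.mem_toFinset.mpr hv)]; ring
        · rw [if_neg hv, if_neg (fun h => hv (List.mem_toFinset.mp h))]; ring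
      simp only [this]
      rw [Finset.sum_add_distrib, Finset.sum_ite_mem, Finset.univ_inter, Finset.mul_sum]
    have hlt := hcon i h1 h2
    rw [hps i h1 h2] at hlt
    have : ε * ∑ v ∈ (P i).support.toFinset, w i v ≤ ε * ((∑ v, w i v) / ((k : ℝ) - 0.6)) :=
      mul_le_mul_of_nonneg_left hlt.le hε0.le
    rw [hrec, hq]
    have : (∑ v, w i v) * (1 + ε / ((k : ℝ) - 0.6))
        = ∑ v, w i v + ε * ((∑ v, w i v) / ((k : ℝ) - 0.6)) := by ring
    linarith [mul_le_mul_of_nonneg_left hlt.le hε0.le]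
  -- geometric growth bound
  have hWgeo : ∀ j, j ≤ r → ∑ v, w (j + 1) v ≤ (∑ v, w 1 v) * q ^ j := by
    intro j
    induction j with
    | zero => intro _; simp
    | succ j ih =>
      intro hjr
      have h1 := hWle (j + 1) (by omega) hjr
      have h2 := ih (by omega)
      calc ∑ v, w (j + 1 + 1) v ≤ (∑ v, w (j + 1) v) * q := h1
        _ ≤ ((∑ v, w 1 v) * q ^ j) * q := mul_le_mul_of_nonneg_right h2 hq0.le
        _ = (∑ v, w 1 v) * q ^ (j + 1) := by ring
  -- initial total weight is at most n
  have hW1 : ∑ v, w 1 v ≤ (n : ℝ) := by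
    have : ∑ v, w 1 v ≤ ∑ _v : V, (1 : ℝ) := by
      apply Finset.sum_le_sum
      intro v _
      by_cases hvs : v = s
      · rw [hvs, hw1s]; norm_num
      · by_cases hvt : v = t
        · rw [hvt, hw1t]; norm_num
        · rw [hw1o v hvs hvt]
    simpa [hn] using this
  have hWfin : ∑ v, w (r + 1) v ≤ (n : ℝ) * q ^ r :=
    le_trans (hWgeo r le_rfl) (mul_le_mul_of_nonneg_right hW1 (by positivity))
  -- pigeonhole: some vertex of S lies on many paths
  set c : V → ℕ := fun v => ((Finset.Icc 1 r).filter (fun i => v ∈ (P i).support)).card with hc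
  have hsumc : r ≤ ∑ v ∈ S, c v := by
    have : ∑ v ∈ S, c v = ∑ i ∈ Finset.Icc 1 r, ∑ v ∈ S, (if v ∈ (P i).support then 1 else 0) := by
      simp only [hc, Finset.card_filter]
      rw [Finset.sum_comm]
    rw [this]
    have : ∀ i ∈ Finset.Icc 1 r, 1 ≤ ∑ v ∈ S, (if v ∈ (P i).support then 1 else 0) := by
      intro i hi
      rw [Finset.mem_Icc] at hi
      obtain ⟨v, hvS, hvp⟩ := hsep (P i) (hP i hi.1 hi.2)
      calc 1 = if v ∈ (P i).support then (1 : ℕ) else 0 := by rw [if_pos hvp]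
        _ ≤ ∑ v ∈ S, (if v ∈ (P i).support then (1 : ℕ) else 0) :=
          Finset.single_le_sum (f := fun u : V => if u ∈ (P i).support then (1 : ℕ) else 0)
            (fun u _ => Nat.zero_le _) hvS
    calc r = ∑ _i ∈ Finset.Icc 1 r, 1 := by simp
      _ ≤ _ := Finset.sum_le_sum this
  have hex : ∃ v ∈ S, r ≤ (k - 1) * c v := by
    by_contra hno
    push_neg at hno
    have h1 : (k - 1) * r ≤ (k - 1) * ∑ v ∈ S, c v := Nat.mul_le_mul_left _ hsumc
    have h2 : (k - 1) * ∑ v ∈ S, c v = ∑ v ∈ S, (k - 1) * c v := Finset.mul_sum _ _ _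
    have h3 : ∑ v ∈ S, (k - 1) * c v ≤ ∑ _v ∈ S, (r - 1) :=
      Finset.sum_le_sum (fun v hv => by have := hno v hv; omega)
    have h4 : ∑ _v ∈ S, (r - 1) = S.card * (r - 1) := by
      rw [Finset.sum_const, smul_eq_mul]
    have h5 : S.card * (r - 1) ≤ (k - 1) * (r - 1) := Nat.mul_le_mul_right _ hScard
    have hk1' : 1 ≤ k - 1 := by omega
    have hlt : (k - 1) * (r - 1) < (k - 1) * r :=
      mul_lt_mul_of_pos_left (by omega : r - 1 < r) (by omega : 0 < k - 1)
    have : (k - 1) * r ≤ (k - 1) * (r - 1) := by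
      calc (k - 1) * r ≤ (k - 1) * ∑ v ∈ S, c v := h1
        _ = ∑ v ∈ S, (k - 1) * c v := h2
        _ ≤ ∑ _v ∈ S, (r - 1) := h3
        _ = S.card * (r - 1) := h4
        _ ≤ (k - 1) * (r - 1) := h5
    exact absurd this (not_le.mpr hlt)
  obtain ⟨v, hvS, hcv⟩ := hex
  have hvs : v ≠ s := fun e => hSs (e ▸ hvS)
  have hvt : v ≠ t := fun e => hSt (e ▸ hvS)
  -- growth of the weight of v
  have hgrow : ∀ j, j ≤ r → w (j + 1) v
      = (1 + ε) ^ (((Finset.Icc 1 j).filter (fun i => v ∈ (P i).support)).card) := by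
    intro j
    induction j with
    | zero =>
      intro _
      simp [hw1o v hvs hvt]
    | succ j ih =>
      intro hjr
      have hins : Finset.Icc 1 (j + 1) = insert (j + 1) (Finset.Icc 1 j) := by
        ext x; simp only [Finset.mem_Icc, Finset.mem_insert]; omega
      have hnotmem : (j + 1) ∉ Finset.Icc 1 j := by simp
      rw [hupd (j + 1) (by omega) hjr v, ih (by omega), hins, Finset.filter_insert]
      by_cases hv : v ∈ (P (j + 1)).support
      · rw [if_pos hv, if_pos hv, Finset.card_insert_of_notMem
          (fun h => hnotmem (Finset.mem_of_mem_filter _ h)), pow_succ]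
        ring
      · rw [if_neg hv, if_neg hv]
  have hwv : w (r + 1) v = (1 + ε) ^ (c v) := hgrow r le_rfl
  have hWv : (1 + ε) ^ (c v) ≤ ∑ u, w (r + 1) u := by
    rw [← hwv]
    exact Finset.single_le_sum (fun u _ => hwnn (r + 1) (by omega) le_rfl u) (Finset.mem_univ v)
  have hkey : (1 + ε) ^ (c v) ≤ (n : ℝ) * q ^ r := le_trans hWv hWfin
  -- take logarithms
  have h1ε : (0 : ℝ) < 1 + ε := by linarith
  have hlog1 : (c v : ℝ) * Real.log (1 + ε) ≤ Real.log n + (r : ℝ) * Real.log q := by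
    have hlhs : Real.log ((1 + ε) ^ (c v)) = (c v : ℝ) * Real.log (1 + ε) := Real.log_pow _ _
    have hrhs : Real.log ((n : ℝ) * q ^ r) = Real.log n + (r : ℝ) * Real.log q := by
      rw [Real.log_mul (by positivity) (by positivity), Real.log_pow]
    calc (c v : ℝ) * Real.log (1 + ε) = Real.log ((1 + ε) ^ (c v)) := hlhs.symm
      _ ≤ Real.log ((n : ℝ) * q ^ r) := Real.log_le_log (by positivity) hkey
      _ = Real.log n + (r : ℝ) * Real.log q := hrhs
  have hlogq : Real.log q ≤ ε / ((k : ℝ) - 0.6) := by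
    have := Real.log_le_sub_one_of_pos hq0
    rw [hq] at this ⊢
    linarith
  have hlogε : ε / (1 + ε) ≤ Real.log (1 + ε) := by
    have h := Real.log_le_sub_one_of_pos (x := (1 + ε)⁻¹) (by positivity)
    rw [Real.log_inv] at h
    have : (1 + ε)⁻¹ - 1 = -(ε / (1 + ε)) := by field_simp; ring
    linarith [this ▸ h]
  have hcε : (r : ℝ) ≤ ((k : ℝ) - 1) * (c v) := by
    have : ((k - 1 : ℕ) : ℝ) * ((c v : ℕ) : ℝ) = (((k - 1) * c v : ℕ) : ℝ) := by
      push_cast; ring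
    have hcast : ((k : ℝ) - 1) = ((k - 1 : ℕ) : ℝ) := by
      have : (1 : ℕ) ≤ k := by omega
      push_cast [Nat.cast_sub this]; ring
    rw [hcast]
    exact_mod_cast hcv
  -- final numeric contradiction
  have hlogε0 : 0 < Real.log (1 + ε) := Real.log_pos (by linarith)
  have hchain : (r : ℝ) / ((k : ℝ) - 1) * (ε / (1 + ε))
      ≤ Real.log n + (r : ℝ) * (ε / ((k : ℝ) - 0.6)) := by
    have h1 : (r : ℝ) / ((k : ℝ) - 1) ≤ (c v : ℝ) := by
      rw [div_le_iff₀ hk1]; linarith [hcε]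
    have h2 : (r : ℝ) / ((k : ℝ) - 1) * (ε / (1 + ε)) ≤ (c v : ℝ) * Real.log (1 + ε) := by
      apply mul_le_mul h1 hlogε (by positivity)
      exact_mod_cast Nat.cast_nonneg (c v)
    have h3 : (r : ℝ) * Real.log q ≤ (r : ℝ) * (ε / ((k : ℝ) - 0.6)) :=
      mul_le_mul_of_nonneg_left hlogq (Nat.cast_nonneg r)
    linarith
  have hrlb : 320 * (k : ℝ) ^ 3 * Real.log n ≤ (r : ℝ) := by
    rw [hr]; exact Nat.le_ceil _
  -- simplify the fractions
  have hfrac1 : ε / (1 + ε) = 1 / (16 * (k : ℝ) - 15) := by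
    rw [hε]
    have h16 : (16 : ℝ) * ((k : ℝ) - 1) ≠ 0 := by positivity
    have h15 : (16 : ℝ) * (k : ℝ) - 15 ≠ 0 := by nlinarith
    field_simp
    ring
  have hA : (r : ℝ) * (1 / (((k : ℝ) - 1) * (16 * (k : ℝ) - 15)))
      ≤ Real.log n + (r : ℝ) * (ε / ((k : ℝ) - 0.6)) := by
    have : (r : ℝ) / ((k : ℝ) - 1) * (ε / (1 + ε))
        = (r : ℝ) * (1 / (((k : ℝ) - 1) * (16 * (k : ℝ) - 15))) := by
      rw [hfrac1]
      have h15 : (16 : ℝ) * (k : ℝ) - 15 ≠ 0 := by nlinarith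
      field_simp
    linarith [this ▸ hchain]

  -- now derive False by arithmetic
  have hd1 : (0 : ℝ) < ((k : ℝ) - 1) * (16 * (k : ℝ) - 15) := by nlinarith
  have hd2 : (0 : ℝ) < 16 * ((k : ℝ) - 1) * ((k : ℝ) - 0.6) := by nlinarith
  have hεv : ε / ((k : ℝ) - 0.6) = 1 / (16 * ((k : ℝ) - 1) * ((k : ℝ) - 0.6)) := by
    rw [hε]; field_simp
  rw [hεv] at hA
  set L := Real.log n with hL
  set K := (k : ℝ) with hK
  have hrpos : (0 : ℝ) ≤ (r : ℝ) := Nat.cast_nonneg r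
  -- r * (1/(D1)) - r * (1/D2) ≥ r * 5.4 / (D1 * D2 / ...) ... clear denominators
  have hgap : (r : ℝ) * (16 * (K - 0.6) - (16 * K - 15))
      ≤ L * (16 * (K - 1) * (16 * K - 15) * (K - 0.6)) := by
    have hne1 : (K - 1) ≠ 0 := by positivity
    have hne2 : (16 * K - 15) ≠ 0 := by nlinarith
    have hne3 : (K - 0.6) ≠ 0 := by positivity
    have hDpos : (0 : ℝ) < 16 * (K - 1) * (16 * K - 15) * (K - 0.6) := by nlinarith
    have e1 : (r : ℝ) * (1 / ((K - 1) * (16 * K - 15)))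
        * (16 * (K - 1) * (16 * K - 15) * (K - 0.6))
        = (r : ℝ) * (16 * (K - 0.6)) := by
      have hD : (K - 1) * (16 * K - 15) ≠ 0 := mul_ne_zero hne1 hne2
      rw [show 16 * (K - 1) * (16 * K - 15) * (K - 0.6) = ((K - 1) * (16 * K - 15)) * (16 * (K - 0.6)) by ring,
        ← mul_assoc, mul_assoc (r : ℝ), one_div_mul_cancel hD, mul_one]
    have e2 : ((L : ℝ) + (r : ℝ) * (1 / (16 * (K - 1) * (K - 0.6))))
        * (16 * (K - 1) * (16 * K - 15) * (K - 0.6))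
        = L * (16 * (K - 1) * (16 * K - 15) * (K - 0.6))
          + (r : ℝ) * (16 * K - 15) := by
      field_simp
    have hmul := mul_le_mul_of_nonneg_right hA hDpos.le
    rw [e1, e2] at hmul
    nlinarith [hmul]
  have hDle : (16 * (K - 1) * (16 * K - 15) * (K - 0.6)) ≤ 256 * K ^ 3 := by
    nlinarith [hkR, sq_nonneg K, sq_nonneg (K - 1)]
  have hgap2 : (r : ℝ) * (16 * (K - 0.6) - (16 * K - 15)) = (r : ℝ) * 5.4 := by ring
  have hfin : (r : ℝ) * 5.4 ≤ L * (256 * K ^ 3) := by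
    rw [← hgap2]
    calc (r : ℝ) * (16 * (K - 0.6) - (16 * K - 15))
        ≤ L * (16 * (K - 1) * (16 * K - 15) * (K - 0.6)) := hgap
      _ ≤ L * (256 * K ^ 3) := mul_le_mul_of_nonneg_left hDle hlogn.le
  have hK2 : (2 : ℝ) ≤ K := hkR
  have hr2 : 320 * K ^ 3 * L * 5.4 ≤ (r : ℝ) * 5.4 :=
    mul_le_mul_of_nonneg_right hrlb (by norm_num)
  -- 320*5.4 = 1728 > 256, and K^3 * L > 0 : contradiction
  nlinarith [hr2, hfin, mul_pos hlogn (by positivity : (0:ℝ) < K ^ 3)]
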